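/- Let Z_1,...,Z_N be arbitrarily correlated random variables over an alphabet of size m ≥ 2 that are identically distributed (each Z_i has the same marginal distribution). Let q_L(z^N) = (N_1!···N_m!/N!)·(1/binom(N+m-1, m-1)) be the Laplace mixture probability, where N_i is the number of occurrences of symbol i in z^N. Then E[log(1/q_L(Z^N))] ≤ m·log(2eN) + N·H(Z_1), where H denotes Shannon entropy in bits. -/

import Mathlib

/-- Marginal distribution of coordinate `j` under a joint pmf `μ` on `Fin N → Fin m`. -/
noncomputable def marg {m N : ℕ} (μ : (Fin N → Fin m) → ℝ) (j : Fin N) (i : Fin m) : ℝ :=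
  ∑ z : Fin N → Fin m, if z j = i then μ z else 0

/-- The Laplace mixture probability `q_L(z^N) = (N₁!⋯N_m!/N!)·(1/binom(N+m-1,m-1))`. -/
noncomputable def laplaceProb (m N : ℕ) (z : Fin N → Fin m) : ℝ :=
  ((∏ i : Fin m, Nat.factorial ((Finset.univ.filter (fun t => z t = i)).card) : ℕ) : ℝ)
    / (Nat.factorial N : ℝ) * (1 / (Nat.choose (N + m - 1) (m - 1) : ℝ))

open Finset Real

private lemma term_le_add_pow {x y : ℝ} (hx : 0 ≤ x) (hy : 0 ≤ y) {k n : ℕ} (h : k ≤ n) :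
    x ^ k * y ^ (n - k) * (n.choose k : ℝ) ≤ (x + y) ^ n := by
  rw [add_pow]
  refine Finset.single_le_sum (f := fun i => x ^ i * y ^ (n - i) * (n.choose i : ℝ))
    (fun i _ => by positivity) (Finset.mem_range.2 (Nat.lt_succ_of_le h))

private lemma multinomial_bound {ι : Type*} [DecidableEq ι] (s : Finset ι) (t : ι → ℕ) (p : ι → ℝ)
    (hp : ∀ i ∈ s, 0 ≤ p i) :
    ((∑ i ∈ s, t i).factorial : ℝ) * ∏ i ∈ s, p i ^ t i
      ≤ (∏ i ∈ s, ((t i).factorial : ℝ)) * (∑ i ∈ s, p i) ^ (∑ i ∈ s, t i) := by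
  induction s using Finset.induction_on with
  | empty => simp
  | @insert a s ha ih =>
    have hpa : 0 ≤ p a := hp a (mem_insert_self a s)
    have hps : ∀ i ∈ s, 0 ≤ p i := fun i hi => hp i (mem_insert_of_mem hi)
    have hQ : 0 ≤ ∑ i ∈ s, p i := Finset.sum_nonneg hps
    have hfacnn : (0:ℝ) ≤ ∏ i ∈ s, ((t i).factorial : ℝ) :=
      Finset.prod_nonneg fun i _ => by positivity
    rw [Finset.sum_insert ha, Finset.sum_insert ha, Finset.prod_insert ha, Finset.prod_insert ha]
    set M := ∑ i ∈ s, t i with hM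
    set Q := ∑ i ∈ s, p i with hQdef
    have hfac : ((t a + M).factorial : ℝ)
        = ((t a + M).choose (t a) : ℝ) * ((t a).factorial : ℝ) * (M.factorial : ℝ) := by
      have h := Nat.add_choose_mul_factorial_mul_factorial (M) (t a)
      rw [Nat.add_comm M (t a)] at h
      have h2 : (t a + M).choose (t a) * (t a).factorial * M.factorial
          = (t a + M).factorial := by rw [← h]; ring
      exact_mod_cast h2.symm
    have key : p a ^ (t a) * Q ^ M * ((t a + M).choose (t a) : ℝ) ≤ (p a + Q) ^ (t a + M) := by
      have := term_le_add_pow hpa hQ (Nat.le_add_right (t a) M)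
      rwa [Nat.add_sub_cancel_left] at this
    calc ((t a + M).factorial : ℝ) * (p a ^ t a * ∏ i ∈ s, p i ^ t i)
        = (((t a + M).choose (t a) : ℝ) * ((t a).factorial:ℝ) * p a ^ t a)
            * ((M.factorial:ℝ) * ∏ i ∈ s, p i ^ t i) := by rw [hfac]; ring
      _ ≤ (((t a + M).choose (t a) : ℝ) * ((t a).factorial:ℝ) * p a ^ t a)
            * ((∏ i ∈ s, ((t i).factorial : ℝ)) * Q ^ M) := by
          refine mul_le_mul_of_nonneg_left (ih hps) (by positivity)
      _ = (((t a).factorial:ℝ) * ∏ i ∈ s, ((t i).factorial : ℝ))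
            * (p a ^ (t a) * Q ^ M * ((t a + M).choose (t a) : ℝ)) := by ring
      _ ≤ (((t a).factorial:ℝ) * ∏ i ∈ s, ((t i).factorial : ℝ)) * (p a + Q) ^ (t a + M) := by
          refine mul_le_mul_of_nonneg_left key (by positivity)

private lemma choose_le_pow_real (m N : ℕ) (hm : 2 ≤ m) (hN : 0 < N) :
    (((N + m - 1).choose (m - 1)) : ℝ) ≤ (2 * Real.exp 1 * N) ^ m := by
  set k := m - 1 with hk
  have hk1 : 1 ≤ k := by omega
  have hnm : N + m - 1 = N + k := by omega
  rw [hnm]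
  have h1 : (N + k).choose k * k.factorial ≤ (2 * N * k) ^ k := by
    calc (N + k).choose k * k.factorial = (N + k).descFactorial k := by
          rw [Nat.descFactorial_eq_factorial_mul_choose]; ring
      _ ≤ (N + k) ^ k := Nat.descFactorial_le_pow _ _
      _ ≤ (2 * N * k) ^ k := Nat.pow_le_pow_left (by nlinarith) _
  have h2 : (k : ℝ) ^ k ≤ Real.exp 1 ^ k * (k.factorial : ℝ) := by
    have h3 := Real.pow_div_factorial_le_exp (x := (k:ℝ)) (by positivity) k
    rw [div_le_iff₀ (by positivity)] at h3
    have he : Real.exp (k:ℝ) = Real.exp 1 ^ k := by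
      rw [← Real.exp_nat_mul, mul_one]
    rw [he] at h3
    exact h3
  have hC : ((N + k).choose k : ℝ) * (k.factorial : ℝ) ≤ ((2 * N * k : ℕ) : ℝ) ^ k := by
    exact_mod_cast h1
  have hkk : (0:ℝ) < (k:ℝ)^k := by positivity
  have hmain : ((N + k).choose k : ℝ) * (k:ℝ)^k ≤ (2 * Real.exp 1 * N) ^ k * (k:ℝ)^k := by
    calc ((N + k).choose k : ℝ) * (k:ℝ)^k
        ≤ ((N + k).choose k : ℝ) * (Real.exp 1 ^ k * (k.factorial:ℝ)) :=
          mul_le_mul_of_nonneg_left h2 (by positivity)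
      _ = Real.exp 1 ^ k * (((N + k).choose k : ℝ) * (k.factorial:ℝ)) := by ring
      _ ≤ Real.exp 1 ^ k * ((2 * N * k : ℕ) : ℝ) ^ k := by
          refine mul_le_mul_of_nonneg_left hC (by positivity)
      _ = (2 * Real.exp 1 * N) ^ k * (k:ℝ)^k := by push_cast; ring
  have hle : ((N + k).choose k : ℝ) ≤ (2 * Real.exp 1 * N) ^ k :=
    le_of_mul_le_mul_right hmain hkk
  have hone : (1:ℝ) ≤ 2 * Real.exp 1 * N := by
    have h4 : (1:ℝ) ≤ Real.exp 1 := Real.one_le_exp (by norm_num)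
    have h5 : (1:ℝ) ≤ N := by exact_mod_cast hN
    nlinarith
  calc ((N + k).choose k : ℝ) ≤ (2 * Real.exp 1 * N) ^ k := hle
    _ ≤ (2 * Real.exp 1 * N) ^ m := pow_le_pow_right₀ hone (by omega)

private lemma fiber_sum (m N : ℕ) (z : Fin N → Fin m) :
    ∑ i : Fin m, (Finset.univ.filter (fun t => z t = i)).card = N := by
  have := Finset.card_eq_sum_card_fiberwise (f := z) (s := Finset.univ) (t := Finset.univ)
    (fun x _ => Finset.mem_univ _)
  simpa using this.symm

private lemma pointwise_bound (m N : ℕ) (hm : 2 ≤ m) (hN : 0 < N) (P : Fin m → ℝ)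
    (hP0 : ∀ i, 0 ≤ P i) (hP1 : ∑ i, P i = 1) (z : Fin N → Fin m)
    (hz : ∀ i, 0 < (Finset.univ.filter (fun t => z t = i)).card → 0 < P i) :
    Real.logb 2 (1 / laplaceProb m N z)
      ≤ (m : ℝ) * Real.logb 2 (2 * Real.exp 1 * N)
        + ∑ i, ((Finset.univ.filter (fun t => z t = i)).card : ℝ) * (-(Real.logb 2 (P i))) := by
  set Nc : Fin m → ℕ := fun i => (Finset.univ.filter (fun t => z t = i)).card with hNc
  have hCpos : 0 < (N + m - 1).choose (m - 1) := Nat.choose_pos (by omega)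
  have hCpos' : (0:ℝ) < ((N + m - 1).choose (m - 1) : ℝ) := by exact_mod_cast hCpos
  have hfacpos : (0:ℝ) < ∏ i : Fin m, ((Nc i).factorial : ℝ) :=
    Finset.prod_pos fun i _ => by exact_mod_cast (Nc i).factorial_pos
  have hNfac : (0:ℝ) < (N.factorial : ℝ) := by exact_mod_cast N.factorial_pos
  have hq : 1 / laplaceProb m N z
      = (N.factorial : ℝ) / (∏ i : Fin m, ((Nc i).factorial : ℝ))
        * ((N + m - 1).choose (m - 1) : ℝ) := by
    rw [laplaceProb]
    push_cast
    field_simp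
    rfl
  have hPr : (0:ℝ) < ∏ i : Fin m, P i ^ Nc i := by
    refine Finset.prod_pos fun i _ => ?_
    rcases Nat.eq_zero_or_pos (Nc i) with h | h
    · rw [h]; norm_num
    · exact pow_pos (hz i h) _
  have hmain := multinomial_bound Finset.univ Nc P (fun i _ => hP0 i)
  rw [fiber_sum m N z, hP1, one_pow, mul_one] at hmain
  have hdiv : (N.factorial : ℝ) / (∏ i : Fin m, ((Nc i).factorial : ℝ))
      ≤ (∏ i : Fin m, P i ^ Nc i)⁻¹ := by
    rw [div_le_iff₀ hfacpos, inv_mul_eq_div, le_div_iff₀ hPr]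
    exact hmain
  have hlog1 : Real.logb 2 ((N.factorial : ℝ) / ∏ i : Fin m, ((Nc i).factorial : ℝ))
      ≤ ∑ i, ((Nc i : ℝ)) * (-(Real.logb 2 (P i))) := by
    calc Real.logb 2 ((N.factorial : ℝ) / ∏ i : Fin m, ((Nc i).factorial : ℝ))
        ≤ Real.logb 2 ((∏ i : Fin m, P i ^ Nc i)⁻¹) :=
          Real.logb_le_logb_of_le one_lt_two (by positivity) hdiv
      _ = -Real.logb 2 (∏ i : Fin m, P i ^ Nc i) := Real.logb_inv _ _
      _ = -∑ i : Fin m, Real.logb 2 (P i ^ Nc i) := by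
          rw [Real.logb_prod]
          intro i _
          rcases Nat.eq_zero_or_pos (Nc i) with h | h
          · rw [h]; norm_num
          · exact ne_of_gt (pow_pos (hz i h) _)
      _ = ∑ i, ((Nc i : ℝ)) * (-(Real.logb 2 (P i))) := by
          rw [← Finset.sum_neg_distrib]
          refine Finset.sum_congr rfl fun i _ => ?_
          rw [Real.logb_pow]; ring
  have hlog2 : Real.logb 2 (((N + m - 1).choose (m - 1) : ℝ))
      ≤ (m : ℝ) * Real.logb 2 (2 * Real.exp 1 * N) := by
    have h1 := choose_le_pow_real m N hm hN
    have := Real.logb_le_logb_of_le one_lt_two hCpos' h1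
    rwa [Real.logb_pow] at this
  rw [hq, Real.logb_mul (by positivity) (ne_of_gt hCpos')]
  have := add_le_add hlog1 hlog2
  linarith

theorem laplace_expected_length_correlated (m N : ℕ) (hm : 2 ≤ m) (hN : 0 < N)
    (μ : (Fin N → Fin m) → ℝ) (hμ0 : ∀ z, 0 ≤ μ z) (hμ1 : ∑ z, μ z = 1)
    (hid : ∀ j j' : Fin N, ∀ i : Fin m, marg μ j i = marg μ j' i) :
    ∑ z, μ z * Real.logb 2 (1 / laplaceProb m N z)
      ≤ (m : ℝ) * Real.logb 2 (2 * Real.exp 1 * N)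
        + (N : ℝ) * (-∑ i : Fin m,
            marg μ ⟨0, hN⟩ i * Real.logb 2 (marg μ ⟨0, hN⟩ i)) := by
  set P : Fin m → ℝ := fun i => marg μ ⟨0, hN⟩ i with hP
  have hP0 : ∀ i, 0 ≤ P i := by
    intro i
    refine Finset.sum_nonneg fun w _ => ?_
    split
    exacts [hμ0 w, le_rfl]
  have hP1 : ∑ i, P i = 1 := by
    rw [show ∑ i, P i = ∑ i : Fin m, ∑ w : Fin N → Fin m,
        if w ⟨0, hN⟩ = i then μ w else 0 from rfl, Finset.sum_comm]
    rw [← hμ1]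
    refine Finset.sum_congr rfl fun w _ => ?_
    simp
  -- expectation of counts
  have hNi : ∀ i : Fin m, ∑ z, μ z * (((Finset.univ.filter (fun t => z t = i)).card : ℕ) : ℝ)
      = (N : ℝ) * P i := by
    intro i
    have step : ∀ z : Fin N → Fin m,
        μ z * (((Finset.univ.filter (fun t => z t = i)).card : ℕ) : ℝ)
        = ∑ t : Fin N, if z t = i then μ z else 0 := by
      intro z
      rw [Finset.card_filter]
      push_cast
      rw [Finset.mul_sum]
      refine Finset.sum_congr rfl fun t _ => ?_
      split <;> simp
    calc ∑ z, μ z * (((Finset.univ.filter (fun t => z t = i)).card : ℕ) : ℝ)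
        = ∑ z, ∑ t : Fin N, if z t = i then μ z else 0 :=
          Finset.sum_congr rfl fun z _ => step z
      _ = ∑ t : Fin N, ∑ z, if z t = i then μ z else 0 := Finset.sum_comm
      _ = ∑ _t : Fin N, P i := Finset.sum_congr rfl fun t _ => hid t ⟨0, hN⟩ i
      _ = (N : ℝ) * P i := by simp [mul_comm]
  -- pointwise comparison
  have hpt : ∑ z, μ z * Real.logb 2 (1 / laplaceProb m N z)
      ≤ ∑ z, μ z * ((m : ℝ) * Real.logb 2 (2 * Real.exp 1 * N)
          + ∑ i, ((Finset.univ.filter (fun t => z t = i)).card : ℝ) * (-(Real.logb 2 (P i)))) := by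
    refine Finset.sum_le_sum fun z _ => ?_
    rcases eq_or_lt_of_le (hμ0 z) with h0 | h0
    · rw [← h0]; simp
    · refine mul_le_mul_of_nonneg_left ?_ (le_of_lt h0)
      refine pointwise_bound m N hm hN P hP0 hP1 z fun i hi => ?_
      obtain ⟨t, ht⟩ := Finset.card_pos.mp hi
      have hti : z t = i := (Finset.mem_filter.mp ht).2
      have hle : μ z ≤ marg μ t i := by
        refine Finset.single_le_sum (f := fun w => if w t = i then μ w else 0)
          (fun w _ => by split; exacts [hμ0 w, le_rfl]) (Finset.mem_univ z) |>.trans_eq' ?_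
        simp [hti]
      have := hid t ⟨0, hN⟩ i
      rw [this] at hle
      exact lt_of_lt_of_le h0 hle
  refine hpt.trans ?_
  have expand : ∑ z, μ z * ((m : ℝ) * Real.logb 2 (2 * Real.exp 1 * N)
        + ∑ i, ((Finset.univ.filter (fun t => z t = i)).card : ℝ) * (-(Real.logb 2 (P i))))
      = (m : ℝ) * Real.logb 2 (2 * Real.exp 1 * N)
        + (N : ℝ) * ∑ i, P i * (-(Real.logb 2 (P i))) := by
    calc ∑ z, μ z * ((m : ℝ) * Real.logb 2 (2 * Real.exp 1 * N)
          + ∑ i, ((Finset.univ.filter (fun t => z t = i)).card : ℝ) * (-(Real.logb 2 (P i))))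
        = ∑ z, (μ z * ((m : ℝ) * Real.logb 2 (2 * Real.exp 1 * N))
            + ∑ i, μ z * (((Finset.univ.filter (fun t => z t = i)).card : ℝ)
              * (-(Real.logb 2 (P i))))) := by
          refine Finset.sum_congr rfl fun z _ => ?_
          rw [mul_add, Finset.mul_sum]
      _ = (∑ z, μ z * ((m : ℝ) * Real.logb 2 (2 * Real.exp 1 * N)))
          + ∑ z, ∑ i, μ z * (((Finset.univ.filter (fun t => z t = i)).card : ℝ)
            * (-(Real.logb 2 (P i)))) := Finset.sum_add_distrib
      _ = (m : ℝ) * Real.logb 2 (2 * Real.exp 1 * N)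
          + ∑ i : Fin m, ∑ z, μ z * (((Finset.univ.filter (fun t => z t = i)).card : ℝ)
            * (-(Real.logb 2 (P i)))) := by
          rw [← Finset.sum_mul, hμ1, one_mul, Finset.sum_comm]
      _ = (m : ℝ) * Real.logb 2 (2 * Real.exp 1 * N)
          + ∑ i : Fin m, (∑ z, μ z * ((Finset.univ.filter (fun t => z t = i)).card : ℝ))
            * (-(Real.logb 2 (P i))) := by
          congr 1
          refine Finset.sum_congr rfl fun i _ => ?_
          rw [Finset.sum_mul]
          refine Finset.sum_congr rfl fun z _ => by ring
      _ = (m : ℝ) * Real.logb 2 (2 * Real.exp 1 * N)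
          + (N : ℝ) * ∑ i, P i * (-(Real.logb 2 (P i))) := by
          rw [Finset.mul_sum]
          congr 1
          refine Finset.sum_congr rfl fun i _ => ?_
          rw [hNi i]; ring
  rw [expand]
  have : ∑ i, P i * (-(Real.logb 2 (P i))) = -∑ i, P i * Real.logb 2 (P i) := by
    rw [← Finset.sum_neg_distrib]
    exact Finset.sum_congr rfl fun i _ => by ring
  rw [this]
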